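/- (Falik–Samorodnitsky) Let (Ω, P) be a probability space and let f ∈ L²(Ω, P) be a function of a sequence of independent random variables X₁, X₂, .... Let F₀ be the trivial σ-algebra, F_i = σ(X₁, ..., X_i), and let Δ_i f = E[f | F_i] − E[f | F_{i−1}] be the martingale increments. Then Var(f) · log( Var(f) / Σ_{i=1}^∞ (E|Δ_i f|)² ) ≤ Σ_{i=1}^∞ Ent((Δ_i f)²). -/

import Mathlib

open MeasureTheory ProbabilityTheory
open scoped ENNReal

/-- The entropy `Ent(Y) = E[Y log Y] − E[Y] log E[Y]` of a nonnegative random variable,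
valued in `[0, ∞]`: it is `+∞` when `Y log Y` fails to be integrable. -/
noncomputable def entNN {Ω : Type} [MeasurableSpace Ω] (μ : Measure Ω) (Y : Ω → ℝ) :
    ℝ≥0∞ :=
  open Classical in
  if Integrable (fun ω => Y ω * Real.log (Y ω)) μ then
    ENNReal.ofReal (∫ ω, Y ω * Real.log (Y ω) ∂μ
      - (∫ ω, Y ω ∂μ) * Real.log (∫ ω, Y ω ∂μ))
  else ∞

/-- The σ-algebra `σ(X₀, …, X_{i-1})` generated by the first `i` variables. -/
def firstVars {Ω : Type} [MeasurableSpace Ω] (X : ℕ → Ω → ℝ) (i : ℕ) :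
    MeasurableSpace Ω :=
  MeasurableSpace.comap (fun ω (j : Fin i) => X j ω) inferInstance

open Filter
open scoped Topology



section Aux
variable {Ω : Type*} {m m0 : MeasurableSpace Ω} {μ : Measure Ω}

lemma FS.integrable_mul2 {f g : Ω → ℝ} (hf : MemLp f 2 μ) (hg : MemLp g 2 μ) :
    Integrable (fun ω => f ω * g ω) μ := by
  have h1 := hf.integrable_sq
  have h2 := hg.integrable_sq
  have h3 : Integrable (fun ω => (1/2 : ℝ) * (f ω ^ 2 + g ω ^ 2)) μ :=
    (h1.add h2).const_mul (1/2 : ℝ)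
  refine h3.mono' (hf.1.mul hg.1) ?_
  filter_upwards with ω
  rw [Real.norm_eq_abs, abs_mul]
  nlinarith [sq_nonneg (|f ω| - |g ω|), sq_abs (f ω), sq_abs (g ω),
    abs_nonneg (f ω), abs_nonneg (g ω)]

lemma FS.memℒp_two_condexp (hm : m ≤ m0) {μ : Measure Ω} [IsFiniteMeasure μ]
    {f : Ω → ℝ} (hf : MemLp f 2 μ) : MemLp (μ[f|m]) 2 μ := by
  have heq : (↑↑↑((condExpL2 ℝ ℝ hm) (hf.toLp f)) : Ω → ℝ) =ᵐ[μ] μ[f|m] := by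
    refine ae_eq_condExp_of_forall_setIntegral_eq hm (hf.integrable one_le_two)
      (fun s hs hμs => integrableOn_Lp_of_measure_ne_top _ fact_one_le_two_ennreal.elim hμs.ne)
      (fun s hs hμs => ?_) (aestronglyMeasurable_condExpL2 hm _)
    rw [integral_condExpL2_eq hm (hf.toLp f) hs hμs.ne]
    exact setIntegral_congr_ae (hm s hs) ((hf.coeFn_toLp).mono fun x hx _ => hx)
  exact (Lp.memLp _).ae_eq heq

lemma FS.integral_mul_sub_condexp (hm : m ≤ m0) {μ : Measure Ω}
    [IsProbabilityMeasure μ] {Y Z : Ω → ℝ} (hY : MemLp Y 2 μ) (hZ : MemLp Z 2 μ)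
    (hZm : AEStronglyMeasurable[m] Z μ) :
    ∫ ω, Z ω * (Y ω - (μ[Y|m]) ω) ∂μ = 0 := by
  have hM : MemLp (μ[Y|m]) 2 μ := FS.memℒp_two_condexp hm hY
  have hZY : Integrable (fun ω => Z ω * Y ω) μ := FS.integrable_mul2 hZ hY
  have hZM : Integrable (fun ω => Z ω * (μ[Y|m]) ω) μ := FS.integrable_mul2 hZ hM
  have hpull : μ[fun ω => Z ω * Y ω|m] =ᵐ[μ] fun ω => Z ω * (μ[Y|m]) ω :=
    condExp_mul_of_aestronglyMeasurable_left hZm hZY (hY.integrable one_le_two)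
  have h1 : ∫ ω, Z ω * Y ω ∂μ = ∫ ω, Z ω * (μ[Y|m]) ω ∂μ := by
    rw [← integral_condExp hm (f := fun ω => Z ω * Y ω)]
    exact integral_congr_ae hpull
  simp_rw [mul_sub]
  rw [integral_sub hZY hZM, h1, sub_self]

lemma FS.sub_le_mul_log_div {u v : ℝ} (hu : 0 ≤ u) (hv : 0 < v) :
    u - v ≤ u * Real.log (u / v) := by
  rcases eq_or_lt_of_le hu with h | h
  · rw [← h, zero_sub, zero_mul]
    linarith
  · have h1 : Real.log (v / u) ≤ v / u - 1 := Real.log_le_sub_one_of_pos (div_pos hv h)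
    have h2 : Real.log (u / v) = - Real.log (v / u) := by
      rw [← Real.log_inv, inv_div]
    have h3 : u * (v / u) = v := by field_simp
    nlinarith

lemma FS.ofReal_sum_le (s : Finset ℕ) (r : ℕ → ℝ) :
    ENNReal.ofReal (∑ i ∈ s, r i) ≤ ∑ i ∈ s, ENNReal.ofReal (r i) := by
  induction s using Finset.cons_induction with
  | empty => simp
  | cons i s hi ih =>
    rw [Finset.sum_cons, Finset.sum_cons]
    exact (ENNReal.ofReal_add_le).trans (by gcongr)

lemma FS.norm_toLp_sub_sq {g h : Ω → ℝ} (hg : MemLp g 2 μ) (hh : MemLp h 2 μ) :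
    ‖hg.toLp g - hh.toLp h‖ ^ 2 = ∫ ω, (g ω - h ω) ^ 2 ∂μ := by
  have hsub : MemLp (g - h) 2 μ := hg.sub hh
  have he : hg.toLp g - hh.toLp h = hsub.toLp (g - h) := by
    rw [MemLp.toLp_sub]
  rw [he, ← real_inner_self_eq_norm_sq, L2.inner_def]
  refine integral_congr_ae ?_
  filter_upwards [hsub.coeFn_toLp] with ω hω
  rw [hω]
  simp [RCLike.inner_apply, sq, Pi.sub_apply]

end Aux

section ClaimA
variable {Ω : Type} [MeasurableSpace Ω] {μ : Measure Ω}

lemma FS.entNN_sq_ge [IsProbabilityMeasure μ] {Y : Ω → ℝ} (hY : MemLp Y 2 μ) :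
    ENNReal.ofReal ((∫ ω, Y ω ^ 2 ∂μ) *
        Real.log ((∫ ω, Y ω ^ 2 ∂μ) / (∫ ω, |Y ω| ∂μ) ^ 2))
      ≤ entNN μ (fun ω => Y ω ^ 2) := by
  unfold entNN
  split_ifs with hint
  swap
  · exact le_top
  simp only
  set a := ∫ ω, Y ω ^ 2 ∂μ with ha
  set m := ∫ ω, |Y ω| ∂μ with hm
  have hYint : Integrable Y μ := hY.integrable one_le_two
  have hYabs : Integrable (fun ω => |Y ω|) μ := hYint.abs
  have hm0 : 0 ≤ m := integral_nonneg fun ω => abs_nonneg _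
  rcases eq_or_lt_of_le hm0 with hm0' | hm0'
  · -- m = 0, so Y = 0 a.e., a = 0
    have hY0 : (fun ω => |Y ω|) =ᵐ[μ] 0 :=
      (integral_eq_zero_iff_of_nonneg (fun ω => abs_nonneg _) hYabs).mp hm0'.symm
    have ha0 : a = 0 := by
      rw [ha]
      rw [integral_congr_ae (g := fun _ => (0:ℝ)) (hY0.mono fun ω h => by
        simp only [Pi.zero_apply, abs_eq_zero] at h
        simp [h])]
      simp
    rw [ha0]
    simp
  · -- m > 0
    have habs2 : MemLp (fun ω => |Y ω|) 2 μ := hY.abs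
    have hvar := variance_nonneg (fun ω => |Y ω|) μ
    rw [variance_eq_sub habs2] at hvar
    have hsq : (∫ ω, ((fun ω => |Y ω|) ^ 2) ω ∂μ) = a := by
      rw [ha]
      refine integral_congr_ae (Eventually.of_forall fun ω => ?_)
      simp [sq_abs]
    rw [hsq] at hvar
    have ham : m ^ 2 ≤ a := by rw [hm]; linarith
    have ha0 : 0 < a := lt_of_lt_of_le (by positivity) ham
    set c := a / m with hc
    have hc0 : 0 < c := div_pos ha0 hm0'
    have hpt : ∀ ω, 2 * (Y ω ^ 2 - c * |Y ω|)
        ≤ Y ω ^ 2 * Real.log (Y ω ^ 2) - Y ω ^ 2 * (2 * Real.log c) := by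
      intro ω
      rcases eq_or_ne (Y ω) 0 with h0 | h0
      · simp [h0]
      · have hY0 : 0 < |Y ω| := abs_pos.mpr h0
        have key := FS.sub_le_mul_log_div hY0.le hc0
        have hlogd : Real.log (|Y ω| / c) = Real.log |Y ω| - Real.log c :=
          Real.log_div hY0.ne' hc0.ne'
        have hlog : Real.log (Y ω ^ 2) = 2 * Real.log |Y ω| := by
          rw [← sq_abs, Real.log_pow]
          norm_num
        have hmul : |Y ω| * (|Y ω| - c)
            ≤ |Y ω| * (|Y ω| * (Real.log |Y ω| - Real.log c)) := by
          rw [← hlogd]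
          exact mul_le_mul_of_nonneg_left key (abs_nonneg _)
        rw [hlog, ← sq_abs (Y ω)]
        nlinarith [hmul]
    have hintL : Integrable (fun ω => 2 * (Y ω ^ 2 - c * |Y ω|)) μ :=
      (hY.integrable_sq.sub (hYabs.const_mul c)).const_mul 2
    have hintR : Integrable
        (fun ω => Y ω ^ 2 * Real.log (Y ω ^ 2) - Y ω ^ 2 * (2 * Real.log c)) μ :=
      hint.sub (hY.integrable_sq.mul_const _)
    have hii := integral_mono hintL hintR hpt
    have hLHS : ∫ ω, 2 * (Y ω ^ 2 - c * |Y ω|) ∂μ = 2 * (a - c * m) := by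
      rw [integral_const_mul, integral_sub hY.integrable_sq (hYabs.const_mul c),
        integral_const_mul]
    have hRHS : ∫ ω, (Y ω ^ 2 * Real.log (Y ω ^ 2) - Y ω ^ 2 * (2 * Real.log c)) ∂μ
        = (∫ ω, Y ω ^ 2 * Real.log (Y ω ^ 2) ∂μ) - a * (2 * Real.log c) := by
      rw [integral_sub hint (hY.integrable_sq.mul_const _), integral_mul_const]
    have hcm : c * m = a := div_mul_cancel₀ a hm0'.ne'
    rw [hLHS, hRHS, hcm, sub_self, mul_zero] at hii
    -- now: 0 ≤ ∫ Y² log Y² − a * 2 log c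
    apply ENNReal.ofReal_le_ofReal
    have hlogc : Real.log c = Real.log a - Real.log m := Real.log_div ha0.ne' hm0'.ne'
    have hlogm2 : Real.log (a / m ^ 2) = Real.log a - 2 * Real.log m := by
      rw [Real.log_div ha0.ne' (by positivity), Real.log_pow]
      norm_num
    rw [hlogm2]
    nlinarith [hii]

end ClaimA

section Glue
variable {Ω : Type} [MeasurableSpace Ω] {X : ℕ → Ω → ℝ}

lemma FS.firstVars_le (hX : ∀ i, Measurable (X i)) (n : ℕ) :
    firstVars X n ≤ (inferInstance : MeasurableSpace Ω) :=
  Measurable.comap_le (measurable_pi_lambda _ fun j => hX j)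

lemma FS.firstVars_mono (n : ℕ) : firstVars X n ≤ firstVars X (n + 1) := by
  have hfac : (fun ω (j : Fin n) => X j ω)
      = (fun (v : Fin (n + 1) → ℝ) (j : Fin n) => v j.castSucc)
        ∘ (fun ω (j : Fin (n + 1)) => X j ω) := by
    funext ω j
    simp [Fin.coe_castSucc]
  show MeasurableSpace.comap _ _ ≤ MeasurableSpace.comap _ _
  rw [hfac, ← MeasurableSpace.comap_comp]
  exact MeasurableSpace.comap_mono
    (Measurable.comap_le (measurable_pi_lambda _ fun j => measurable_pi_apply _))

lemma FS.firstVars_zero : firstVars X 0 = ⊥ := by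
  have hpi : (inferInstance : MeasurableSpace (Fin 0 → ℝ)) = ⊥ := iSup_of_empty _
  show MeasurableSpace.comap _ _ = ⊥
  rw [hpi, MeasurableSpace.comap_bot]

lemma FS.measurable_sup (hX : ∀ i, Measurable (X i)) (i : ℕ) :
    Measurable[⨆ n, firstVars X n] (X i) := by
  have h1 : Measurable[firstVars X (i + 1)] (fun ω (j : Fin (i + 1)) => X j ω) := by
    rw [measurable_iff_comap_le]
    exact le_rfl
  have h2 : Measurable (fun v : Fin (i + 1) → ℝ => v ⟨i, Nat.lt_succ_self i⟩) :=
    measurable_pi_apply _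
  have h3 : Measurable[firstVars X (i + 1)] (X i) := by
    have heq : X i = (fun v : Fin (i + 1) → ℝ => v ⟨i, Nat.lt_succ_self i⟩)
        ∘ (fun ω (j : Fin (i + 1)) => X j ω) := by
      funext ω
      rfl
    rw [heq]
    exact h2.comp h1
  exact h3.mono (le_iSup (fun n => firstVars X n) (i + 1)) le_rfl

end Glue

set_option maxHeartbeats 2000000 in
theorem FS.main {Ω : Type} [MeasureSpace Ω] [IsProbabilityMeasure (ℙ : Measure Ω)]
    (F : ℕ → MeasurableSpace Ω) (hle : ∀ n, F n ≤ (inferInstance : MeasurableSpace Ω))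
    (hmono : ∀ n, F n ≤ F (n + 1)) (hbot : F 0 = ⊥)
    (f : Ω → ℝ) (hL2 : MemLp f 2 ℙ)
    (hf_meas : StronglyMeasurable[⨆ n, F n] f)
    (Δ : ℕ → Ω → ℝ)
    (hΔ : ∀ i ω, Δ i ω = (ℙ[f|F (i + 1)]) ω - (ℙ[f|F i]) ω) :
    ENNReal.ofReal (variance f ℙ *
        Real.log (variance f ℙ / ∑' i : ℕ, (∫ ω, |Δ i ω| ∂(ℙ : Measure Ω)) ^ 2))
      ≤ ∑' i : ℕ, entNN (ℙ : Measure Ω) (fun ω => Δ i ω ^ 2) := by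
  classical
  set V : ℝ := variance f ℙ with hV
  set B : ℝ := ∑' i : ℕ, (∫ ω, |Δ i ω| ∂(ℙ : Measure Ω)) ^ 2 with hB
  have hFmono : Monotone F := monotone_nat_of_le_succ hmono
  have hM2 : ∀ n, MemLp (ℙ[f|F n]) 2 ℙ := fun n => FS.memℒp_two_condexp (hle n) hL2
  have hMsm : ∀ n, StronglyMeasurable[F n] (ℙ[f|F n]) := fun n => stronglyMeasurable_condExp
  have hΔfun : ∀ i, Δ i = (ℙ[f|F (i + 1)]) - (ℙ[f|F i]) := fun i => funext fun ω => hΔ i ω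
  have hΔ2 : ∀ i, MemLp (Δ i) 2 ℙ := fun i => (hΔfun i) ▸ ((hM2 (i + 1)).sub (hM2 i))
  have hΔint : ∀ i, Integrable (Δ i) ℙ := fun i => (hΔ2 i).integrable one_le_two
  -- orthogonality
  have horth : ∀ n (Z : Ω → ℝ), MemLp Z 2 ℙ → AEStronglyMeasurable[F n] Z ℙ →
      ∫ ω, Z ω * (f ω - (ℙ[f|F n]) ω) ∂ℙ = 0 := fun n Z hZ2 hZm =>
    FS.integral_mul_sub_condexp (hle n) hL2 hZ2 hZm
  have hcross : ∀ n (Z : Ω → ℝ), MemLp Z 2 ℙ → AEStronglyMeasurable[F n] Z ℙ →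
      ∫ ω, Z ω * Δ n ω ∂ℙ = 0 := by
    intro n Z hZ2 hZm
    have h1 : ∫ ω, Z ω * (f ω - (ℙ[f|F n]) ω) ∂ℙ = 0 := horth n Z hZ2 hZm
    have h2 : ∫ ω, Z ω * (f ω - (ℙ[f|F (n + 1)]) ω) ∂ℙ = 0 :=
      horth (n + 1) Z hZ2 (hZm.mono (hmono n))
    have heq : ∀ ω, Z ω * Δ n ω
        = Z ω * (f ω - (ℙ[f|F n]) ω) - Z ω * (f ω - (ℙ[f|F (n + 1)]) ω) := by
      intro ω; rw [hΔ]; ring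
    have hi1 : Integrable (fun ω => Z ω * (f ω - (ℙ[f|F n]) ω)) ℙ :=
      FS.integrable_mul2 hZ2 (hL2.sub (hM2 n))
    have hi2 : Integrable (fun ω => Z ω * (f ω - (ℙ[f|F (n + 1)]) ω)) ℙ :=
      FS.integrable_mul2 hZ2 (hL2.sub (hM2 (n + 1)))
    rw [integral_congr_ae (Eventually.of_forall heq), integral_sub hi1 hi2, h1, h2, sub_zero]
  set c : ℝ := ∫ ω, f ω ∂ℙ with hc
  have h0 : (ℙ[f|F 0]) = fun _ => c := by rw [hbot]; exact condExp_bot f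
  set a : ℕ → ℝ := fun i => ∫ ω, Δ i ω ^ 2 ∂ℙ with ha_def
  have ha_nonneg : ∀ i, 0 ≤ a i := fun i => integral_nonneg fun ω => sq_nonneg _
  have hS : ∀ n, ∫ ω, ((ℙ[f|F n]) ω - c) ^ 2 ∂ℙ = ∑ i ∈ Finset.range n, a i := by
    intro n
    induction n with
    | zero => simp [h0]
    | succ n ih =>
      have hsplit : ∀ ω, ((ℙ[f|F (n + 1)]) ω - c) ^ 2
          = ((ℙ[f|F n]) ω - c) ^ 2 + (2 * (((ℙ[f|F n]) ω - c) * Δ n ω) + Δ n ω ^ 2) := by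
        intro ω; rw [hΔ]; ring
      have hZ2 : MemLp (fun ω => (ℙ[f|F n]) ω - c) 2 ℙ := (hM2 n).sub (memLp_const c)
      have hZm : AEStronglyMeasurable[F n] (fun ω => (ℙ[f|F n]) ω - c) ℙ :=
        ((hMsm n).sub stronglyMeasurable_const).aestronglyMeasurable
      have hcr : ∫ ω, ((ℙ[f|F n]) ω - c) * Δ n ω ∂ℙ = 0 := hcross n _ hZ2 hZm
      have hi1 : Integrable (fun ω => ((ℙ[f|F n]) ω - c) ^ 2) ℙ := hZ2.integrable_sq
      have hi2 : Integrable (fun ω => ((ℙ[f|F n]) ω - c) * Δ n ω) ℙ :=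
        FS.integrable_mul2 hZ2 (hΔ2 n)
      have hi3 : Integrable (fun ω => Δ n ω ^ 2) ℙ := (hΔ2 n).integrable_sq
      have hadd : ∫ ω, (((ℙ[f|F n]) ω - c) ^ 2
            + (2 * (((ℙ[f|F n]) ω - c) * Δ n ω) + Δ n ω ^ 2)) ∂ℙ
          = (∫ ω, ((ℙ[f|F n]) ω - c) ^ 2 ∂ℙ)
            + ∫ ω, (2 * (((ℙ[f|F n]) ω - c) * Δ n ω) + Δ n ω ^ 2) ∂ℙ :=
        integral_add hi1 ((hi2.const_mul 2).add hi3)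
      have hadd2 : ∫ ω, (2 * (((ℙ[f|F n]) ω - c) * Δ n ω) + Δ n ω ^ 2) ∂ℙ
          = (∫ ω, 2 * (((ℙ[f|F n]) ω - c) * Δ n ω) ∂ℙ) + ∫ ω, Δ n ω ^ 2 ∂ℙ :=
        integral_add (hi2.const_mul 2) hi3
      rw [integral_congr_ae (Eventually.of_forall hsplit), hadd, hadd2, integral_const_mul,
        hcr, ih, Finset.sum_range_succ]
      simp [ha_def]
  have hveq : V = ∫ ω, (f ω - c) ^ 2 ∂ℙ := by
    rw [hV, variance_eq_integral hL2.aemeasurable]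
  have hPyth : ∀ n, (∑ i ∈ Finset.range n, a i) + ∫ ω, (f ω - (ℙ[f|F n]) ω) ^ 2 ∂ℙ = V := by
    intro n
    have hsplit : ∀ ω, (f ω - c) ^ 2
        = (f ω - (ℙ[f|F n]) ω) ^ 2 + (2 * (((ℙ[f|F n]) ω - c) * (f ω - (ℙ[f|F n]) ω))
            + ((ℙ[f|F n]) ω - c) ^ 2) := fun ω => by ring
    have hZ2 : MemLp (fun ω => (ℙ[f|F n]) ω - c) 2 ℙ := (hM2 n).sub (memLp_const c)
    have hZm : AEStronglyMeasurable[F n] (fun ω => (ℙ[f|F n]) ω - c) ℙ :=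
      ((hMsm n).sub stronglyMeasurable_const).aestronglyMeasurable
    have hfM2 : MemLp (fun ω => f ω - (ℙ[f|F n]) ω) 2 ℙ := hL2.sub (hM2 n)
    have hi1 : Integrable (fun ω => (f ω - (ℙ[f|F n]) ω) ^ 2) ℙ := hfM2.integrable_sq
    have hi2 : Integrable (fun ω => ((ℙ[f|F n]) ω - c) * (f ω - (ℙ[f|F n]) ω)) ℙ :=
      FS.integrable_mul2 hZ2 hfM2
    have hi3 : Integrable (fun ω => ((ℙ[f|F n]) ω - c) ^ 2) ℙ := hZ2.integrable_sq
    have hcr : ∫ ω, ((ℙ[f|F n]) ω - c) * (f ω - (ℙ[f|F n]) ω) ∂ℙ = 0 := horth n _ hZ2 hZm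
    have hadd : ∫ ω, ((f ω - (ℙ[f|F n]) ω) ^ 2
          + (2 * (((ℙ[f|F n]) ω - c) * (f ω - (ℙ[f|F n]) ω)) + ((ℙ[f|F n]) ω - c) ^ 2)) ∂ℙ
        = (∫ ω, (f ω - (ℙ[f|F n]) ω) ^ 2 ∂ℙ)
          + ∫ ω, (2 * (((ℙ[f|F n]) ω - c) * (f ω - (ℙ[f|F n]) ω)) + ((ℙ[f|F n]) ω - c) ^ 2) ∂ℙ :=
      integral_add hi1 ((hi2.const_mul 2).add hi3)
    have hadd2 : ∫ ω, (2 * (((ℙ[f|F n]) ω - c) * (f ω - (ℙ[f|F n]) ω)) + ((ℙ[f|F n]) ω - c) ^ 2) ∂ℙ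
        = (∫ ω, 2 * (((ℙ[f|F n]) ω - c) * (f ω - (ℙ[f|F n]) ω)) ∂ℙ)
          + ∫ ω, ((ℙ[f|F n]) ω - c) ^ 2 ∂ℙ :=
      integral_add (hi2.const_mul 2) hi3
    rw [hveq, integral_congr_ae (Eventually.of_forall hsplit), hadd, hadd2, integral_const_mul,
      hcr, hS n]
    ring
  have hw_nonneg : ∀ n, 0 ≤ ∫ ω, (f ω - (ℙ[f|F n]) ω) ^ 2 ∂ℙ :=
    fun n => integral_nonneg fun ω => sq_nonneg _
  have ha_sum : Summable a :=
    summable_of_sum_range_le ha_nonneg fun n => by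
      have h1 := hPyth n; have h2 := hw_nonneg n; linarith
  have hT : ∀ n m, n ≤ m → ∫ ω, ((ℙ[f|F m]) ω - (ℙ[f|F n]) ω) ^ 2 ∂ℙ
      = ∑ i ∈ Finset.Ico n m, a i := by
    intro n m hnm
    induction m, hnm using Nat.le_induction with
    | base => simp
    | succ m hnm ih =>
      have hsplit : ∀ ω, ((ℙ[f|F (m + 1)]) ω - (ℙ[f|F n]) ω) ^ 2
          = ((ℙ[f|F m]) ω - (ℙ[f|F n]) ω) ^ 2
            + (2 * (((ℙ[f|F m]) ω - (ℙ[f|F n]) ω) * Δ m ω) + Δ m ω ^ 2) := by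
        intro ω; rw [hΔ]; ring
      have hZ2 : MemLp (fun ω => (ℙ[f|F m]) ω - (ℙ[f|F n]) ω) 2 ℙ := (hM2 m).sub (hM2 n)
      have hZm : AEStronglyMeasurable[F m] (fun ω => (ℙ[f|F m]) ω - (ℙ[f|F n]) ω) ℙ :=
        ((hMsm m).sub ((hMsm n).mono (hFmono hnm))).aestronglyMeasurable
      have hcr : ∫ ω, ((ℙ[f|F m]) ω - (ℙ[f|F n]) ω) * Δ m ω ∂ℙ = 0 := hcross m _ hZ2 hZm
      have hi1 : Integrable (fun ω => ((ℙ[f|F m]) ω - (ℙ[f|F n]) ω) ^ 2) ℙ := hZ2.integrable_sq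
      have hi2 : Integrable (fun ω => ((ℙ[f|F m]) ω - (ℙ[f|F n]) ω) * Δ m ω) ℙ :=
        FS.integrable_mul2 hZ2 (hΔ2 m)
      have hi3 : Integrable (fun ω => Δ m ω ^ 2) ℙ := (hΔ2 m).integrable_sq
      have hadd : ∫ ω, (((ℙ[f|F m]) ω - (ℙ[f|F n]) ω) ^ 2
            + (2 * (((ℙ[f|F m]) ω - (ℙ[f|F n]) ω) * Δ m ω) + Δ m ω ^ 2)) ∂ℙ
          = (∫ ω, ((ℙ[f|F m]) ω - (ℙ[f|F n]) ω) ^ 2 ∂ℙ)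
            + ∫ ω, (2 * (((ℙ[f|F m]) ω - (ℙ[f|F n]) ω) * Δ m ω) + Δ m ω ^ 2) ∂ℙ :=
        integral_add hi1 ((hi2.const_mul 2).add hi3)
      have hadd2 : ∫ ω, (2 * (((ℙ[f|F m]) ω - (ℙ[f|F n]) ω) * Δ m ω) + Δ m ω ^ 2) ∂ℙ
          = (∫ ω, 2 * (((ℙ[f|F m]) ω - (ℙ[f|F n]) ω) * Δ m ω) ∂ℙ) + ∫ ω, Δ m ω ^ 2 ∂ℙ :=
        integral_add (hi2.const_mul 2) hi3
      rw [integral_congr_ae (Eventually.of_forall hsplit), hadd, hadd2, integral_const_mul, hcr, ih,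
        Finset.sum_Ico_succ_top hnm]
      simp [ha_def]
  -- the martingale in L²
  set ML : ℕ → Lp ℝ 2 (ℙ : Measure Ω) := fun n => (hM2 n).toLp _ with hML
  have hMLnorm : ∀ n m, n ≤ m → ‖ML m - ML n‖ ^ 2 = ∑ i ∈ Finset.Ico n m, a i := by
    intro n m hnm
    rw [hML]
    rw [FS.norm_toLp_sub_sq (hM2 m) (hM2 n)]
    exact hT n m hnm
  have hcauchy : CauchySeq ML := by
    rw [Metric.cauchySeq_iff']
    intro ε hε
    have htends : Tendsto (fun n => (∑' i, a i) - ∑ i ∈ Finset.range n, a i) atTop (𝓝 0) := by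
      have h := ha_sum.hasSum.tendsto_sum_nat
      simpa using (tendsto_const_nhds (x := ∑' i, a i)).sub h
    have hev : ∀ᶠ n in atTop, (∑' i, a i) - ∑ i ∈ Finset.range n, a i < ε ^ 2 :=
      htends.eventually_lt_const (by positivity)
    obtain ⟨N, hN⟩ := hev.exists
    refine ⟨N, fun n hn => ?_⟩
    have h1 : ‖ML n - ML N‖ ^ 2 = ∑ i ∈ Finset.Ico N n, a i := hMLnorm N n hn
    have h2 : ∑ i ∈ Finset.range N, a i + ∑ i ∈ Finset.Ico N n, a i
        = ∑ i ∈ Finset.range n, a i := Finset.sum_range_add_sum_Ico _ hn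
    have h3 : ∑ i ∈ Finset.range n, a i ≤ ∑' i, a i :=
      Summable.sum_le_tsum _ (fun i _ => ha_nonneg i) ha_sum
    rw [dist_eq_norm]
    nlinarith [norm_nonneg (ML n - ML N)]
  obtain ⟨L, hL⟩ := cauchySeq_tendsto_of_complete hcauchy
  have hdist0 : Tendsto (fun n => dist (ML n) L) atTop (𝓝 0) :=
    tendsto_iff_dist_tendsto_zero.mp hL
  -- Lévy: L¹ convergence of the martingale to f
  have hlevy : Tendsto (fun n => eLpNorm ((ℙ[f|F n]) - f) 1 ℙ) atTop (𝓝 0) := by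
    have := (hL2.integrable one_le_two).tendsto_eLpNorm_condExp
      (ℱ := ⟨F, hFmono, hle⟩) (by exact hf_meas)
    exact this
  have hfL : f =ᵐ[ℙ] ⇑L := by
    have hup : ∀ n, eLpNorm ((ℙ[f|F n] : Ω → ℝ) - ⇑L) 1 ℙ ≤ ENNReal.ofReal (dist (ML n) L) := by
      intro n
      have hae : ((ℙ[f|F n] : Ω → ℝ) - ⇑L) =ᵐ[ℙ] ⇑(ML n - L) := by
        filter_upwards [Lp.coeFn_sub (ML n) L, (hM2 n).coeFn_toLp] with ω hω1 hω2
        rw [hω1, Pi.sub_apply, Pi.sub_apply, ← hω2]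
      calc eLpNorm ((ℙ[f|F n] : Ω → ℝ) - ⇑L) 1 ℙ = eLpNorm (⇑(ML n - L)) 1 ℙ :=
            eLpNorm_congr_ae hae
        _ ≤ eLpNorm (⇑(ML n - L)) 2 ℙ :=
            eLpNorm_le_eLpNorm_of_exponent_le (by norm_num) (Lp.aestronglyMeasurable _)
        _ = ENNReal.ofReal (dist (ML n) L) := by
            rw [dist_eq_norm, Lp.norm_def, ENNReal.ofReal_toReal (Lp.eLpNorm_ne_top _)]
    have h2 : Tendsto (fun n => eLpNorm ((ℙ[f|F n] : Ω → ℝ) - ⇑L) 1 ℙ) atTop (𝓝 0) := by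
      refine tendsto_of_tendsto_of_tendsto_of_le_of_le tendsto_const_nhds ?_
        (fun n => zero_le) hup
      have := ENNReal.tendsto_ofReal hdist0
      simpa using this
    have h1 : Tendsto (fun n => eLpNorm (f - (ℙ[f|F n])) 1 ℙ) atTop (𝓝 0) := by
      refine hlevy.congr fun n => ?_
      exact eLpNorm_sub_comm _ _ _ _
    have hbound : ∀ n, eLpNorm (f - ⇑L) 1 ℙ
        ≤ eLpNorm (f - (ℙ[f|F n])) 1 ℙ + eLpNorm ((ℙ[f|F n] : Ω → ℝ) - ⇑L) 1 ℙ := by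
      intro n
      have hsplit : f - ⇑L = (f - (ℙ[f|F n])) + ((ℙ[f|F n] : Ω → ℝ) - ⇑L) := by
        funext ω; simp
      rw [hsplit]
      exact eLpNorm_add_le
        (hL2.1.sub ((stronglyMeasurable_condExp.mono (hle n)).aestronglyMeasurable))
        (((stronglyMeasurable_condExp.mono (hle n)).aestronglyMeasurable).sub
          (Lp.aestronglyMeasurable L)) le_rfl
    have hsum0 : Tendsto (fun n => eLpNorm (f - (ℙ[f|F n])) 1 ℙ
        + eLpNorm ((ℙ[f|F n] : Ω → ℝ) - ⇑L) 1 ℙ) atTop (𝓝 0) := by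
      simpa using h1.add h2
    have hzero : eLpNorm (f - ⇑L) 1 ℙ = 0 :=
      le_antisymm (ge_of_tendsto' hsum0 hbound) zero_le
    have hae0 := (eLpNorm_eq_zero_iff (hL2.1.sub (Lp.aestronglyMeasurable L)) one_ne_zero).mp hzero
    filter_upwards [hae0] with ω hω
    have : f ω - L ω = 0 := by simpa using hω
    linarith
  have hLf : hL2.toLp f = L := Lp.ext ((hL2.coeFn_toLp).trans hfL)
  have hrem : Tendsto (fun n => ∫ ω, (f ω - (ℙ[f|F n]) ω) ^ 2 ∂ℙ) atTop (𝓝 0) := by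
    have heq : ∀ n, ∫ ω, (f ω - (ℙ[f|F n]) ω) ^ 2 ∂ℙ = dist (ML n) L ^ 2 := by
      intro n
      rw [← FS.norm_toLp_sub_sq hL2 (hM2 n), hLf, dist_eq_norm, norm_sub_rev]
    refine Tendsto.congr (fun n => (heq n).symm) ?_
    simpa using hdist0.pow 2
  have hconv : Tendsto (fun n => ∑ i ∈ Finset.range n, a i) atTop (𝓝 V) := by
    have heq : ∀ n, ∑ i ∈ Finset.range n, a i
        = V - ∫ ω, (f ω - (ℙ[f|F n]) ω) ^ 2 ∂ℙ := fun n => by linarith [hPyth n]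
    refine Tendsto.congr (fun n => (heq n).symm) ?_
    simpa using (tendsto_const_nhds (x := V) (f := (atTop : Filter ℕ))).sub hrem
  set b : ℕ → ℝ := fun i => (∫ ω, |Δ i ω| ∂ℙ) ^ 2 with hb_def
  have hBb : B = ∑' i, b i := by rw [hB]
  have hb_nonneg : ∀ i, 0 ≤ b i := fun i => sq_nonneg _
  have hb_le_a : ∀ i, b i ≤ a i := by
    intro i
    have habs2 : MemLp (fun ω => |Δ i ω|) 2 ℙ := (hΔ2 i).abs
    have hvar := variance_nonneg (fun ω => |Δ i ω|) ℙ
    rw [variance_eq_sub habs2] at hvar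
    have hsq : (∫ ω, ((fun ω => |Δ i ω|) ^ 2) ω ∂ℙ) = a i := by
      rw [ha_def]
      exact integral_congr_ae (Eventually.of_forall fun ω => by simp [sq_abs])
    rw [hsq] at hvar
    have hbi : b i = (∫ ω, |Δ i ω| ∂ℙ) ^ 2 := rfl
    rw [hbi]
    linarith [hvar]
  rcases le_or_gt (V * Real.log (V / B)) 0 with hneg | hpos
  · exact le_trans (le_of_eq (ENNReal.ofReal_eq_zero.mpr hneg)) zero_le
  have hVnn : 0 ≤ V := by rw [hV]; exact variance_nonneg f ℙ
  have hV0 : 0 < V := by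
    rcases hVnn.eq_or_lt with h | h
    · rw [← h] at hpos; simp at hpos
    · exact h
  have hlog0 : 0 < Real.log (V / B) := by
    by_contra h
    push_neg at h
    nlinarith
  have hBnn : 0 ≤ B := by
    rw [hBb]
    exact tsum_nonneg hb_nonneg
  have hB0 : 0 < B := by
    rcases hBnn.eq_or_lt with h | h
    · rw [← h, div_zero, Real.log_zero] at hlog0; exact absurd hlog0 (lt_irrefl 0)
    · exact h
  have ht0 : 0 < V / B := div_pos hV0 hB0
  set r : ℕ → ℝ := fun i => a i * Real.log (V / B) + (a i - b i * (V / B)) with hr_def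
  have hb_sum : Summable b := Summable.of_nonneg_of_le hb_nonneg hb_le_a ha_sum
  have hbtend : Tendsto (fun n => ∑ i ∈ Finset.range n, b i) atTop (𝓝 B) := by
    rw [hBb]
    exact hb_sum.hasSum.tendsto_sum_nat
  have hrtend : Tendsto (fun n => ∑ i ∈ Finset.range n, r i) atTop
      (𝓝 (V * Real.log (V / B))) := by
    have hpart : ∀ n, ∑ i ∈ Finset.range n, r i
        = (∑ i ∈ Finset.range n, a i) * Real.log (V / B)
          + ((∑ i ∈ Finset.range n, a i) - (∑ i ∈ Finset.range n, b i) * (V / B)) := by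
      intro n
      rw [hr_def, Finset.sum_add_distrib, Finset.sum_sub_distrib, ← Finset.sum_mul,
        ← Finset.sum_mul]
    have h3 := (hconv.mul_const (Real.log (V / B))).add (hconv.sub (hbtend.mul_const (V / B)))
    have hlim : V * Real.log (V / B) + (V - B * (V / B)) = V * Real.log (V / B) := by
      field_simp
      ring
    rw [hlim] at h3
    exact h3.congr fun n => (hpart n).symm
  have hofReal : ENNReal.ofReal (V * Real.log (V / B)) ≤ ∑' i, ENNReal.ofReal (r i) :=
    le_of_tendsto ((ENNReal.continuous_ofReal.tendsto _).comp hrtend)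
      (Eventually.of_forall fun n => (FS.ofReal_sum_le _ r).trans (ENNReal.sum_le_tsum _))
  refine le_trans hofReal (ENNReal.tsum_le_tsum fun i => ?_)
  rcases (hb_nonneg i).eq_or_lt with hb0 | hb0
  · have h2 : (∫ ω, |Δ i ω| ∂ℙ) ^ 2 = 0 := hb0.symm
    have hm0 : ∫ ω, |Δ i ω| ∂ℙ = 0 :=
      (pow_eq_zero_iff (by norm_num : (2 : ℕ) ≠ 0)).mp h2
    have hΔ0 : (fun ω => |Δ i ω|) =ᵐ[ℙ] 0 :=
      (integral_eq_zero_iff_of_nonneg (fun ω => abs_nonneg _) (hΔint i).abs).mp hm0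
    have ha0 : a i = 0 := by
      rw [ha_def]
      show (∫ ω, Δ i ω ^ 2 ∂ℙ) = 0
      rw [integral_congr_ae (g := fun _ => (0 : ℝ)) (hΔ0.mono fun ω h => by
        simp only [Pi.zero_apply, abs_eq_zero] at h
        simp [h])]
      simp
    have hr0 : r i = 0 := by
      show a i * Real.log (V / B) + (a i - b i * (V / B)) = 0
      rw [ha0, ← hb0]
      ring
    rw [hr0]
    simp
  · have hkey := FS.entNN_sq_ge (μ := (ℙ : Measure Ω)) (hΔ2 i)
    refine le_trans (ENNReal.ofReal_le_ofReal ?_) hkey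
    show a i * Real.log (V / B) + (a i - b i * (V / B)) ≤ a i * Real.log (a i / b i)
    have hai : 0 < a i := lt_of_lt_of_le hb0 (hb_le_a i)
    have hbt : 0 < b i * (V / B) := mul_pos hb0 ht0
    have hkey2 := FS.sub_le_mul_log_div hai.le hbt
    have hl1 : Real.log (a i / (b i * (V / B)))
        = Real.log (a i) - Real.log (b i) - Real.log (V / B) := by
      rw [Real.log_div hai.ne' hbt.ne', Real.log_mul hb0.ne' ht0.ne']
      ring
    have hl2 : Real.log (a i / b i) = Real.log (a i) - Real.log (b i) :=
      Real.log_div hai.ne' hb0.ne'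
    rw [hl1] at hkey2
    rw [hl2]
    nlinarith [hkey2]


/-- **The Falik–Samorodnitsky inequality.**
Let `f ∈ L²` be a function of independent random variables `X₁, X₂, …`, and let
`Δᵢ f = E[f | Fᵢ] − E[f | F_{i−1}]` be its martingale increments relative to the
filtration `Fᵢ = σ(X₁, …, Xᵢ)` (with `F₀` trivial). Then
`Var(f) · log(Var(f) / ∑ᵢ (E|Δᵢ f|)²) ≤ ∑ᵢ Ent((Δᵢ f)²)`. -/
theorem falik_samorodnitsky
    {Ω : Type} [MeasureSpace Ω] [IsProbabilityMeasure (ℙ : Measure Ω)]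
    (X : ℕ → Ω → ℝ) (hX : ∀ i, Measurable (X i))
    (hindep : iIndepFun X ℙ)
    (g : (ℕ → ℝ) → ℝ) (hg : Measurable g)
    (f : Ω → ℝ) (hfg : f = fun ω => g fun i => X i ω)
    (hL2 : MemLp f 2 ℙ) :
    ENNReal.ofReal (variance f ℙ *
        Real.log (variance f ℙ /
          ∑' i : ℕ, (∫ ω, |(ℙ[f|firstVars X (i + 1)]) ω
              - (ℙ[f|firstVars X i]) ω| ∂(ℙ : Measure Ω)) ^ 2))
      ≤ ∑' i : ℕ, entNN (ℙ : Measure Ω)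
          (fun ω => ((ℙ[f|firstVars X (i + 1)]) ω - (ℙ[f|firstVars X i]) ω) ^ 2) := by
  have hf_meas : StronglyMeasurable[⨆ n, firstVars X n] f := by
    rw [hfg]
    have h1 : Measurable[⨆ n, firstVars X n] (fun ω (i : ℕ) => X i ω) :=
      @measurable_pi_lambda Ω ℕ (fun _ => ℝ) (⨆ n, firstVars X n) _
        (fun ω i => X i ω) (fun i => FS.measurable_sup hX i)
    have h2 : Measurable[⨆ n, firstVars X n] (fun ω => g fun i => X i ω) := hg.comp h1
    exact h2.stronglyMeasurable
  exact FS.main (firstVars X) (FS.firstVars_le hX) (fun n => FS.firstVars_mono n)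
    FS.firstVars_zero f hL2 hf_meas
    (fun i ω => (ℙ[f|firstVars X (i + 1)]) ω - (ℙ[f|firstVars X i]) ω)
    (fun i ω => rfl)
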